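/- For every real c > 0 there exists a constant K > 0 (depending only on c) such that for every finite simple directed graph G=(V,E) and every ρ ∈ (0,1], if every vertex v ∈ V satisfies d^in(v) ≥ (c/ρ)·ln(e/ρ), then min-seed^{(1)}(G,ρ) ≤ K·ρ·|V|. -/

import Mathlib

/-- The in-neighborhood of `v` in the directed graph with edge relation `E`. -/
def inNbr {V : Type*} (E : V → V → Prop) (v : V) : Set V := {u | E u v}

/-- One round of the synchronous reversible cascade on a directed graph with edge
relation `E`: `dactive E ρ S k` is the set of active vertices in round `k`. -/
def dactive {V : Type*} (E : V → V → Prop) (ρ : ℝ) (S : Set V) : ℕ → Set V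
  | 0 => S
  | k + 1 =>
      {v | 0 < (inNbr E v).ncard ∧
        ρ * (inNbr E v).ncard ≤ ((inNbr E v ∩ dactive E ρ S k).ncard : ℝ)} ∪
      {v | v ∈ S ∧ (inNbr E v).ncard = 0}

/-- `dminSeed E ρ k` is the minimum number of seeds activating all vertices in round `k`. -/
noncomputable def dminSeed {V : Type*} (E : V → V → Prop) (ρ : ℝ) (k : ℕ) : ℕ :=
  sInf {m | ∃ S : Set V, S.ncard = m ∧ dactive E ρ S k = Set.univ}

private lemma master {V : Type} [Fintype V] [DecidableEq V] (q : ℝ) (h : V → ℝ) :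
    ∑ S : Finset V, (∏ u ∈ S, (q * h u)) * ∏ u ∈ (Finset.univ \ S), (1 - q)
      = ∏ u : V, (q * h u + (1 - q)) := by
  rw [Finset.prod_add, ← Finset.powerset_univ]

private lemma sum_w_one {V : Type} [Fintype V] [DecidableEq V] {q : ℝ} :
    ∑ S : Finset V, (∏ _u ∈ S, q) * ∏ _u ∈ (Finset.univ \ S), (1 - q) = 1 := by
  have h := master (V := V) q (fun _ => 1)
  simp only [mul_one] at h
  rw [h]
  exact Finset.prod_eq_one fun u _ => by ring

private lemma E_mem {V : Type} [Fintype V] [DecidableEq V] {q : ℝ} (u : V) :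
    ∑ S : Finset V, ((∏ _u ∈ S, q) * ∏ _u ∈ (Finset.univ \ S), (1 - q))
        * (if u ∈ S then (1:ℝ) else 0) = q := by
  have h := master (V := V) q (fun x => if x = u then 0 else 1)
  have h1 : ∀ S : Finset V, ∏ x ∈ S, (q * if x = u then (0:ℝ) else 1)
      = (∏ _x ∈ S, q) * (if u ∈ S then (0:ℝ) else 1) := by
    intro S
    rw [Finset.prod_mul_distrib]
    congr 1
    by_cases hu : u ∈ S
    · rw [if_pos hu]; exact Finset.prod_eq_zero hu (by simp)
    · rw [if_neg hu]; exact Finset.prod_eq_one fun x hx => by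
        rw [if_neg]; rintro rfl; exact hu hx
  simp only [h1] at h
  have h2 : ∏ x : V, (q * (if x = u then (0:ℝ) else 1) + (1 - q)) = 1 - q := by
    rw [Finset.prod_eq_single u (fun b _ hb => by rw [if_neg hb]; ring) (by simp)]
    simp
  rw [h2] at h
  have h3 : ∀ S : Finset V, ((∏ _u ∈ S, q) * ∏ _u ∈ (Finset.univ \ S), (1 - q))
        * (if u ∈ S then (1:ℝ) else 0)
      = ((∏ _u ∈ S, q) * ∏ _u ∈ (Finset.univ \ S), (1 - q))
        - (∏ _x ∈ S, q) * (if u ∈ S then (0:ℝ) else 1) * ∏ _u ∈ (Finset.univ \ S), (1 - q) := by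
    intro S; by_cases hu : u ∈ S <;> simp [hu] <;> ring
  rw [Finset.sum_congr rfl (fun S _ => h3 S), Finset.sum_sub_distrib, sum_w_one]
  rw [h]
  ring

private lemma E_half {V : Type} [Fintype V] [DecidableEq V] {q : ℝ} (A : Finset V) :
    ∑ S : Finset V, ((∏ _u ∈ S, q) * ∏ _u ∈ (Finset.univ \ S), (1 - q))
        * (1/2 : ℝ) ^ ((A ∩ S).card) = (1 - q/2) ^ A.card := by
  have h := master (V := V) q (fun x => if x ∈ A then (1/2 : ℝ) else 1)
  have h1 : ∀ S : Finset V, ∏ x ∈ S, (q * if x ∈ A then (1/2:ℝ) else 1)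
      = (∏ _x ∈ S, q) * (1/2 : ℝ) ^ ((A ∩ S).card) := by
    intro S
    rw [Finset.prod_mul_distrib]
    congr 1
    rw [← Finset.prod_filter (fun x => x ∈ A) (fun _ => (1/2:ℝ)),
      Finset.filter_mem_eq_inter, Finset.prod_const, Finset.inter_comm]
  have h2 : ∏ x : V, (q * (if x ∈ A then (1/2:ℝ) else 1) + (1 - q)) = (1 - q/2) ^ A.card := by
    have : ∀ x : V, (q * (if x ∈ A then (1/2:ℝ) else 1) + (1 - q))
        = if x ∈ A then (1 - q/2 : ℝ) else 1 := by
      intro x; by_cases hx : x ∈ A <;> simp [hx] <;> ring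
    rw [Finset.prod_congr rfl fun x _ => this x,
      ← Finset.prod_filter (fun x => x ∈ A) (fun _ => (1 - q/2:ℝ)),
      Finset.filter_mem_eq_inter, Finset.prod_const, Finset.univ_inter]
  simp only [h1] at h
  rw [← h2, ← h]
  exact Finset.sum_congr rfl fun S _ => by ring

private lemma E_card {V : Type} [Fintype V] [DecidableEq V] {q : ℝ} :
    ∑ S : Finset V, ((∏ _u ∈ S, q) * ∏ _u ∈ (Finset.univ \ S), (1 - q)) * (S.card : ℝ)
      = q * (Fintype.card V) := by
  have h1 : ∀ S : Finset V, (S.card : ℝ) = ∑ u : V, (if u ∈ S then (1:ℝ) else 0) := by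
    intro S
    rw [← Finset.sum_filter (fun u => u ∈ S) (fun _ => (1:ℝ)),
      Finset.filter_mem_eq_inter, Finset.univ_inter, Finset.sum_const]
    simp
  calc ∑ S : Finset V, ((∏ _u ∈ S, q) * ∏ _u ∈ (Finset.univ \ S), (1 - q)) * (S.card : ℝ)
      = ∑ S : Finset V, ∑ u : V, ((∏ _u ∈ S, q) * ∏ _u ∈ (Finset.univ \ S), (1 - q))
          * (if u ∈ S then (1:ℝ) else 0) := by
        exact Finset.sum_congr rfl fun S _ => by rw [h1 S, Finset.mul_sum]
    _ = ∑ u : V, ∑ S : Finset V, ((∏ _u ∈ S, q) * ∏ _u ∈ (Finset.univ \ S), (1 - q))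
          * (if u ∈ S then (1:ℝ) else 0) := Finset.sum_comm
    _ = ∑ _u : V, q := Finset.sum_congr rfl fun u _ => E_mem u
    _ = q * (Fintype.card V) := by rw [Finset.sum_const]; simp [mul_comm]

private lemma numeric (c ρ x : ℝ) (hc : 0 < c) (hρ0 : 0 < ρ) (hρ1 : ρ ≤ 1)
    (hx : c * Real.log (Real.exp 1 / ρ) ≤ x) :
    (x + 1) * Real.exp (-((4/c + 2)/2 - Real.log 2) * x) ≤ (c + 1) * ρ := by
  set A : ℝ := (4/c + 2)/2 - Real.log 2 with hAdef
  have hlog2 : Real.log 2 ≤ 1 := by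
    have h := Real.log_le_sub_one_of_pos (by norm_num : (0:ℝ) < 2)
    linarith
  have heq : (4/c + 2)/2 = 2/c + 1 := by ring
  have hA : 2/c ≤ A := by rw [hAdef, heq]; linarith
  have hA0 : 0 < A := lt_of_lt_of_le (by positivity) hA
  clear_value A
  have hlogρ : Real.log (Real.exp 1 / ρ) = 1 - Real.log ρ := by
    rw [Real.log_div (Real.exp_ne_zero 1) (ne_of_gt hρ0), Real.log_exp]
  have hL : 1 ≤ Real.log (Real.exp 1 / ρ) := by
    have : Real.log ρ ≤ 0 := Real.log_nonpos (le_of_lt hρ0) hρ1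
    rw [hlogρ]; linarith
  have hcx : c ≤ x := le_trans (by nlinarith) hx
  have hx0 : 0 < x := lt_of_lt_of_le hc hcx
  have hstep2 : Real.exp (-(A * x / 2)) ≤ ρ := by
    have h2 : x / c ≤ A * x / 2 := by
      have hr : (2/c)*x = 2*(x/c) := by ring
      nlinarith [mul_nonneg (sub_nonneg.2 hA) hx0.le, hr]
    have h1 : Real.log (Real.exp 1 / ρ) ≤ x / c := by
      rw [le_div_iff₀ hc]; nlinarith
    have h3 : -(A * x / 2) ≤ Real.log ρ := by rw [hlogρ] at h1; linarith
    calc Real.exp (-(A * x / 2)) ≤ Real.exp (Real.log ρ) := Real.exp_le_exp.2 h3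
      _ = ρ := Real.exp_log hρ0
  have hstep1 : x * Real.exp (-(A * x / 2)) ≤ c := by
    have h1 : A * x / 2 ≤ Real.exp (A * x / 2) := by
      linarith [Real.add_one_le_exp (A * x / 2)]
    have hmul : Real.exp (-(A * x / 2)) * Real.exp (A * x / 2) = 1 := by
      rw [← Real.exp_add]; simp
    have he : 0 < Real.exp (-(A * x / 2)) := Real.exp_pos _
    have h4 : c * (2/c) = 2 := by field_simp
    have h5 : (2:ℝ) ≤ c * A := by
      have := mul_le_mul_of_nonneg_left hA hc.le
      linarith [h4]
    have hct : x ≤ c * (A * x / 2) := by nlinarith [mul_nonneg (sub_nonneg.2 h5) hx0.le]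
    nlinarith [mul_nonneg (mul_nonneg hc.le (sub_nonneg.2 h1)) he.le,
      mul_nonneg (sub_nonneg.2 hct) he.le]
  have hsplit : Real.exp (-(A * x)) = Real.exp (-(A * x / 2)) * Real.exp (-(A * x / 2)) := by
    rw [← Real.exp_add]; ring_nf
  have he : 0 < Real.exp (-(A * x / 2)) := Real.exp_pos _
  have he1 : Real.exp (-(A * x / 2)) ≤ 1 := le_trans hstep2 hρ1
  have hee : Real.exp (-(A * x / 2)) * Real.exp (-(A * x / 2)) ≤ ρ * 1 :=
    mul_le_mul hstep2 he1 he.le (le_of_lt hρ0)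
  have hgoal : -A * x = -(A * x) := by ring
  rw [hgoal, hsplit]
  nlinarith [mul_le_mul_of_nonneg_right hstep1 he.le,
    mul_le_mul_of_nonneg_left hstep2 hc.le]

private lemma E_fail {V : Type} [Fintype V] [DecidableEq V] {q : ℝ} (hq0 : 0 ≤ q)
    (hq1 : q ≤ 1) (A : Finset V) (r : ℝ) :
    ∑ S : Finset V, ((∏ _u ∈ S, q) * ∏ _u ∈ (Finset.univ \ S), (1 - q))
        * (if ((A ∩ S).card : ℝ) < r then 1 else 0)
      ≤ Real.exp (Real.log 2 * r - q * (A.card : ℝ) / 2) := by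
  have hw : ∀ S : Finset V, 0 ≤ (∏ _u ∈ S, q) * ∏ _u ∈ (Finset.univ \ S), (1 - q) :=
    fun S => mul_nonneg (Finset.prod_nonneg fun _ _ => hq0)
      (Finset.prod_nonneg fun _ _ => by linarith)
  have hhalf : ∀ m : ℕ, (1/2 : ℝ) ^ m = Real.exp (-((m : ℝ) * Real.log 2)) := by
    intro m
    rw [Real.exp_neg, Real.exp_nat_mul, Real.exp_log (by norm_num : (0:ℝ) < 2)]
    rw [one_div, inv_pow]
  have hlog2 : 0 ≤ Real.log 2 := Real.log_nonneg (by norm_num)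
  have hpt : ∀ S : Finset V,
      ((∏ _u ∈ S, q) * ∏ _u ∈ (Finset.univ \ S), (1 - q))
        * (if ((A ∩ S).card : ℝ) < r then 1 else 0)
      ≤ Real.exp (Real.log 2 * r)
        * (((∏ _u ∈ S, q) * ∏ _u ∈ (Finset.univ \ S), (1 - q))
          * (1/2 : ℝ) ^ ((A ∩ S).card)) := by
    intro S
    set w := (∏ _u ∈ S, q) * ∏ _u ∈ (Finset.univ \ S), (1 - q) with hwdef
    by_cases hfs : ((A ∩ S).card : ℝ) < r
    · rw [if_pos hfs, mul_one, hhalf]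
      have h1 : (1:ℝ) ≤ Real.exp (Real.log 2 * r) * Real.exp (-(((A ∩ S).card : ℝ) * Real.log 2)) := by
        rw [← Real.exp_add]
        refine Real.one_le_exp ?_
        nlinarith [hfs.le]
      calc w = w * 1 := by ring
        _ ≤ w * (Real.exp (Real.log 2 * r) * Real.exp (-(((A ∩ S).card : ℝ) * Real.log 2))) :=
          mul_le_mul_of_nonneg_left h1 (hw S)
        _ = Real.exp (Real.log 2 * r) * (w * Real.exp (-(((A ∩ S).card : ℝ) * Real.log 2))) := by
          ring
    · rw [if_neg hfs, mul_zero]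
      have := hw S
      positivity
  calc ∑ S : Finset V, ((∏ _u ∈ S, q) * ∏ _u ∈ (Finset.univ \ S), (1 - q))
        * (if ((A ∩ S).card : ℝ) < r then 1 else 0)
      ≤ ∑ S : Finset V, Real.exp (Real.log 2 * r)
          * (((∏ _u ∈ S, q) * ∏ _u ∈ (Finset.univ \ S), (1 - q))
            * (1/2 : ℝ) ^ ((A ∩ S).card)) := Finset.sum_le_sum fun S _ => hpt S
    _ = Real.exp (Real.log 2 * r) * ((1 - q/2) ^ A.card) := by
        rw [← Finset.mul_sum, E_half]
    _ ≤ Real.exp (Real.log 2 * r) * (Real.exp (-(q/2)) ^ A.card) := by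
        refine mul_le_mul_of_nonneg_left ?_ (Real.exp_pos _).le
        refine pow_le_pow_left₀ (by linarith) ?_ _
        linarith [Real.add_one_le_exp (-(q/2))]
    _ = Real.exp (Real.log 2 * r - q * (A.card : ℝ) / 2) := by
        rw [← Real.exp_nat_mul, ← Real.exp_add]
        congr 1
        ring

private lemma exists_good (c : ℝ) (hc : 0 < c) {V : Type} [Fintype V] [DecidableEq V]
    (ρ : ℝ) (hρ0 : 0 < ρ) (hρ1 : ρ ≤ 1) (N : V → Finset V)
    (hd : ∀ v, c / ρ * Real.log (Real.exp 1 / ρ) ≤ ((N v).card : ℝ)) :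
    ∃ S : Finset V, (∀ v, ρ * ((N v).card : ℝ) ≤ (((N v) ∩ S).card : ℝ)) ∧
      ((S.card : ℝ) ≤ (4/c + c + 3) * ρ * (Fintype.card V)) := by
  classical
  have hL : 1 ≤ Real.log (Real.exp 1 / ρ) := by
    rw [Real.log_div (Real.exp_ne_zero 1) (ne_of_gt hρ0), Real.log_exp]
    linarith [Real.log_nonpos (le_of_lt hρ0) hρ1]
  have hx : ∀ v, c * Real.log (Real.exp 1 / ρ) ≤ ρ * ((N v).card : ℝ) := by
    intro v
    have h := mul_le_mul_of_nonneg_right (hd v) hρ0.le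
    have he : c / ρ * Real.log (Real.exp 1 / ρ) * ρ = c * Real.log (Real.exp 1 / ρ) := by
      field_simp
    rw [he] at h
    linarith [h, mul_comm ρ ((N v).card : ℝ)]
  have hxnn : ∀ v, 0 ≤ ρ * ((N v).card : ℝ) := fun v => by positivity
  by_cases hcase : 1 ≤ (4/c + 2) * ρ
  · refine ⟨Finset.univ, fun v => ?_, ?_⟩
    · rw [Finset.inter_univ]
      nlinarith [show (0:ℝ) ≤ ((N v).card : ℝ) from Nat.cast_nonneg _]
    · rw [Finset.card_univ]
      have hn : (0:ℝ) ≤ (Fintype.card V : ℝ) := Nat.cast_nonneg _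
      nlinarith [mul_nonneg (mul_nonneg (by positivity : (0:ℝ) ≤ c + 1) hρ0.le) hn]
  · push_neg at hcase
    set q : ℝ := (4/c + 2) * ρ with hqdef
    have hq0 : 0 < q := by positivity
    have hq1 : q < 1 := hcase
    set w : Finset V → ℝ := fun S => (∏ _u ∈ S, q) * ∏ _u ∈ (Finset.univ \ S), (1 - q)
      with hwdef
    have hwpos : ∀ S, 0 < w S := fun S =>
      mul_pos (Finset.prod_pos fun _ _ => hq0) (Finset.prod_pos fun _ _ => by linarith)
    set f : Finset V → ℝ := fun S => (S.card : ℝ)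
      + ∑ v : V, (if (((N v) ∩ S).card : ℝ) < ρ * ((N v).card : ℝ)
          then ρ * ((N v).card : ℝ) + 1 else 0) with hfdef
    -- expectation bound
    have hEf : ∑ S : Finset V, w S * f S ≤ (4/c + c + 3) * ρ * (Fintype.card V) := by
      have e1 : ∑ S : Finset V, w S * f S
          = (∑ S : Finset V, w S * (S.card : ℝ))
            + ∑ v : V, ∑ S : Finset V, w S
              * (if (((N v) ∩ S).card : ℝ) < ρ * ((N v).card : ℝ)
                  then ρ * ((N v).card : ℝ) + 1 else 0) := by
        calc ∑ S : Finset V, w S * f S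
            = ∑ S : Finset V, (w S * (S.card : ℝ)
              + ∑ v : V, w S * (if (((N v) ∩ S).card : ℝ) < ρ * ((N v).card : ℝ)
                  then ρ * ((N v).card : ℝ) + 1 else 0)) :=
              Finset.sum_congr rfl fun S _ => by rw [hfdef]; rw [mul_add, Finset.mul_sum]
          _ = _ := by rw [Finset.sum_add_distrib, Finset.sum_comm]
      have e2 : ∑ S : Finset V, w S * (S.card : ℝ) = q * (Fintype.card V) := E_card
      have e3 : ∀ v : V, ∑ S : Finset V, w S
          * (if (((N v) ∩ S).card : ℝ) < ρ * ((N v).card : ℝ)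
              then ρ * ((N v).card : ℝ) + 1 else 0) ≤ (c + 1) * ρ := by
        intro v
        set r : ℝ := ρ * ((N v).card : ℝ) with hrdef
        have e4 : ∑ S : Finset V, w S
            * (if (((N v) ∩ S).card : ℝ) < r then r + 1 else 0)
            = (r + 1) * ∑ S : Finset V, w S
              * (if (((N v) ∩ S).card : ℝ) < r then 1 else 0) := by
          rw [Finset.mul_sum]
          refine Finset.sum_congr rfl fun S _ => ?_
          by_cases hfs : (((N v) ∩ S).card : ℝ) < r
          · rw [if_pos hfs, if_pos hfs]; ring
          · rw [if_neg hfs, if_neg hfs]; ring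
        rw [e4]
        have e5 : ∑ S : Finset V, w S
            * (if (((N v) ∩ S).card : ℝ) < r then 1 else 0)
            ≤ Real.exp (Real.log 2 * r - q * ((N v).card : ℝ) / 2) :=
          E_fail hq0.le hq1.le (N v) r
        have e6 : Real.log 2 * r - q * ((N v).card : ℝ) / 2
            = -((4/c + 2)/2 - Real.log 2) * r := by
          rw [hqdef, hrdef]; ring
        have e7 : (r + 1) * Real.exp (-((4/c + 2)/2 - Real.log 2) * r) ≤ (c + 1) * ρ :=
          numeric c ρ r hc hρ0 hρ1 (hx v)
        calc (r + 1) * ∑ S : Finset V, w S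
              * (if (((N v) ∩ S).card : ℝ) < r then 1 else 0)
            ≤ (r + 1) * Real.exp (Real.log 2 * r - q * ((N v).card : ℝ) / 2) := by
              refine mul_le_mul_of_nonneg_left e5 ?_
              have := hxnn v; rw [hrdef]; linarith
          _ = (r + 1) * Real.exp (-((4/c + 2)/2 - Real.log 2) * r) := by rw [e6]
          _ ≤ (c + 1) * ρ := e7
      calc ∑ S : Finset V, w S * f S
          = q * (Fintype.card V)
            + ∑ v : V, ∑ S : Finset V, w S
              * (if (((N v) ∩ S).card : ℝ) < ρ * ((N v).card : ℝ)
                  then ρ * ((N v).card : ℝ) + 1 else 0) := by rw [e1, e2]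
        _ ≤ q * (Fintype.card V) + ∑ _v : V, (c + 1) * ρ := by
            refine add_le_add_right (Finset.sum_le_sum fun v _ => e3 v) _
        _ = (4/c + c + 3) * ρ * (Fintype.card V) := by
            rw [Finset.sum_const, Finset.card_univ, hqdef, nsmul_eq_mul]
            ring
    -- existence of a good S
    obtain ⟨S, hS⟩ : ∃ S : Finset V, f S ≤ (4/c + c + 3) * ρ * (Fintype.card V) := by
      by_contra hcon
      push_neg at hcon
      have h1 : ∑ S : Finset V, w S * ((4/c + c + 3) * ρ * (Fintype.card V))
          < ∑ S : Finset V, w S * f S :=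
        Finset.sum_lt_sum_of_nonempty ⟨∅, Finset.mem_univ _⟩
          (fun S _ => mul_lt_mul_of_pos_left (hcon S) (hwpos S))
      rw [← Finset.sum_mul, sum_w_one, one_mul] at h1
      linarith
    -- fix the failed vertices
    set fail : Finset V := Finset.univ.filter
      (fun v => (((N v) ∩ S).card : ℝ) < ρ * ((N v).card : ℝ)) with hfail
    have hTex : ∀ v : V, ∃ T : Finset V, T ⊆ N v ∧ T.card = ⌈ρ * ((N v).card : ℝ)⌉₊ := by
      intro v
      obtain ⟨T, hT1, hT2⟩ := Finset.exists_subset_card_eq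
        (s := N v) (n := ⌈ρ * ((N v).card : ℝ)⌉₊)
        (Nat.ceil_le.mpr (by nlinarith [show (0:ℝ) ≤ ((N v).card : ℝ) from Nat.cast_nonneg _]))
      exact ⟨T, hT1, hT2⟩
    choose T hT1 hT2 using hTex
    refine ⟨S ∪ fail.biUnion T, fun v => ?_, ?_⟩
    · by_cases hv : (((N v) ∩ S).card : ℝ) < ρ * ((N v).card : ℝ)
      · have hvf : v ∈ fail := Finset.mem_filter.2 ⟨Finset.mem_univ _, hv⟩
        have hsub : T v ⊆ (N v) ∩ (S ∪ fail.biUnion T) := fun u hu =>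
          Finset.mem_inter.2 ⟨hT1 v hu,
            Finset.mem_union_right _ (Finset.mem_biUnion.2 ⟨v, hvf, hu⟩)⟩
        calc ρ * ((N v).card : ℝ) ≤ (⌈ρ * ((N v).card : ℝ)⌉₊ : ℝ) := Nat.le_ceil _
          _ = ((T v).card : ℝ) := by rw [hT2]
          _ ≤ _ := Nat.cast_le.2 (Finset.card_le_card hsub)
      · push_neg at hv
        refine le_trans hv (Nat.cast_le.2 (Finset.card_le_card ?_))
        exact Finset.inter_subset_inter (Finset.Subset.refl _) Finset.subset_union_left
    · have hnat : (S ∪ fail.biUnion T).card ≤ S.card + ∑ v ∈ fail, (T v).card :=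
        le_trans (Finset.card_union_le _ _) (add_le_add_right Finset.card_biUnion_le _)
      have h1 : ((S ∪ fail.biUnion T).card : ℝ) ≤ (S.card : ℝ) + ∑ v ∈ fail, ((T v).card : ℝ) := by
        exact_mod_cast hnat
      have h2 : ∑ v ∈ fail, ((T v).card : ℝ) ≤ ∑ v ∈ fail, (ρ * ((N v).card : ℝ) + 1) := by
        refine Finset.sum_le_sum fun v _ => ?_
        rw [hT2]
        exact le_of_lt (Nat.ceil_lt_add_one (hxnn v))
      have h3 : ∑ v ∈ fail, (ρ * ((N v).card : ℝ) + 1)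
          = ∑ v : V, (if (((N v) ∩ S).card : ℝ) < ρ * ((N v).card : ℝ)
              then ρ * ((N v).card : ℝ) + 1 else 0) := by
        rw [hfail, Finset.sum_filter]
      have h4 : (S.card : ℝ) + ∑ v ∈ fail, (ρ * ((N v).card : ℝ) + 1) = f S := by
        rw [h3, hfdef]
      linarith

theorem stmt_9 (c : ℝ) (hc : 0 < c) :
    ∃ K : ℝ, 0 < K ∧
      ∀ (V : Type) [Fintype V] (E : V → V → Prop), Irreflexive E →
        ∀ ρ : ℝ, 0 < ρ → ρ ≤ 1 →
          (∀ v : V, c / ρ * Real.log (Real.exp 1 / ρ) ≤ ((inNbr E v).ncard : ℝ)) →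
          (dminSeed E ρ 1 : ℝ) ≤ K * ρ * (Fintype.card V) := by
  refine ⟨4/c + c + 3, by positivity, ?_⟩
  intro V _ E _ ρ hρ0 hρ1 hdeg
  classical
  set N : V → Finset V := fun v => (Set.toFinite (inNbr E v)).toFinset with hN
  have hNcoe : ∀ v, ↑(N v) = inNbr E v := fun v => Set.Finite.coe_toFinset _
  have hNcard : ∀ v, (inNbr E v).ncard = (N v).card := fun v => by
    rw [← hNcoe v, Set.ncard_coe_finset]
  have hd : ∀ v, c / ρ * Real.log (Real.exp 1 / ρ) ≤ ((N v).card : ℝ) := fun v => by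
    rw [← hNcard]; exact hdeg v
  obtain ⟨S, hS1, hS2⟩ := exists_good c hc ρ hρ0 hρ1 N hd
  have hL : 1 ≤ Real.log (Real.exp 1 / ρ) := by
    rw [Real.log_div (Real.exp_ne_zero 1) (ne_of_gt hρ0), Real.log_exp]
    linarith [Real.log_nonpos (le_of_lt hρ0) hρ1]
  have hpos : ∀ v, 0 < (inNbr E v).ncard := by
    intro v
    have h0 : (0:ℝ) < c / ρ * Real.log (Real.exp 1 / ρ) :=
      mul_pos (div_pos hc hρ0) (by linarith)
    have h1 : (0:ℝ) < ((inNbr E v).ncard : ℝ) := lt_of_lt_of_le h0 (hdeg v)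
    exact_mod_cast h1
  have hact : dactive E ρ (↑S : Set V) 1 = Set.univ := by
    rw [Set.eq_univ_iff_forall]
    intro v
    show v ∈ _ ∪ _
    left
    refine ⟨hpos v, ?_⟩
    have hint : inNbr E v ∩ dactive E ρ (↑S : Set V) 0 = ↑((N v) ∩ S) := by
      show inNbr E v ∩ (↑S : Set V) = _
      rw [Finset.coe_inter, hNcoe]
    rw [hint, Set.ncard_coe_finset, hNcard]
    exact hS1 v
  have hmem : S.card ∈ {m | ∃ S' : Set V, S'.ncard = m ∧ dactive E ρ S' 1 = Set.univ} :=
    ⟨↑S, Set.ncard_coe_finset S, hact⟩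
  have hle : dminSeed E ρ 1 ≤ S.card := Nat.sInf_le hmem
  calc (dminSeed E ρ 1 : ℝ) ≤ (S.card : ℝ) := Nat.cast_le.2 hle
    _ ≤ (4/c + c + 3) * ρ * (Fintype.card V) := hS2
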